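/- Assume the standing hypotheses (σ-finite $(X,\mathscr A,\mu)$, $\mu_w\circ\phi^{-1}\ll\mu$). The weighted composition operator $C_{\phi,w}$ is densely defined in $L^2(\mu)$ if and only if $\mathsf{h}_{\phi,w}<\infty$ a.e. $[\mu]$. -/

import Mathlib

open MeasureTheory ENNReal NNReal Filter Topology

variable {X : Type*} [MeasurableSpace X]

/-- The measure `μ_w` with density `|w|²` with respect to `μ`. -/
noncomputable def wcMeasure (μ : Measure X) (w : X → ℂ) : Measure X :=
  μ.withDensity fun x => (‖w x‖₊ : ℝ≥0∞) ^ 2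

/-- The Radon–Nikodym derivative `h_{φ,w} = d(μ_w ∘ φ⁻¹)/dμ`. -/
noncomputable def wcDeriv (μ : Measure X) (w : X → ℂ) (φ : X → X) : X → ℝ≥0∞ :=
  ((wcMeasure μ w).map φ).rnDeriv μ

/-- The modified weight `w_α = w · (h_{φ,w}/(h_{φ,w}∘φ))^{α/2}` (interpreted a.e.). -/
noncomputable def wcAlpha (μ : Measure X) (w : X → ℂ) (φ : X → X) (α : ℝ) : X → ℂ :=
  fun x => w x * (((wcDeriv μ w φ x / wcDeriv μ w φ (φ x)) ^ (α / 2)).toReal : ℂ)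

/-- `E` is (a version of) the conditional expectation of the nonnegative function `f`
with respect to the σ-algebra `φ⁻¹(𝒜)` and the measure `ν`. -/
def IsCondExp (φ : X → X) (ν : Measure X) (f E : X → ℝ≥0∞) : Prop :=
  Measurable[MeasurableSpace.comap φ inferInstance] E ∧
    ∀ s : Set X, MeasurableSet s → ∫⁻ x in φ ⁻¹' s, E x ∂ν = ∫⁻ x in φ ⁻¹' s, f x ∂ν

/-- `g = E ∘ φ⁻¹`: the measurable function with `g ∘ φ = E` a.e. `[ν]`,
vanishing a.e. `[μ]` on the set where `h = 0`. -/
def IsQuot (φ : X → X) (μ ν : Measure X) (h : X → ℝ≥0∞) (E g : X → ℝ≥0∞) : Prop :=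
  Measurable g ∧ (∀ᵐ x ∂ν, g (φ x) = E x) ∧ (∀ᵐ x ∂μ, h x = 0 → g x = 0)

/-- `E` is (a version of) the conditional expectation of the complex function `f`
with respect to the σ-algebra `φ⁻¹(𝒜)` and the measure `ν`. -/
def IsCondExpC (φ : X → X) (ν : Measure X) (f E : X → ℂ) : Prop :=
  Measurable[MeasurableSpace.comap φ inferInstance] E ∧
    ∀ s : Set X, MeasurableSet s → ν (φ ⁻¹' s) < ⊤ →
      ∫ x in φ ⁻¹' s, E x ∂ν = ∫ x in φ ⁻¹' s, f x ∂ν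

/-- `f_w = χ_{{w ≠ 0}} f / w`. -/
noncomputable def fw (w f : X → ℂ) : X → ℂ := fun x => if w x = 0 then 0 else f x / w x


private lemma wc_congr (μ : Measure X) (w : X → ℂ) (φ : X → X)
    (hw : Measurable w) (hφ : Measurable φ) (habs : (wcMeasure μ w).map φ ≪ μ)
    {f₁ f₂ : X → ℂ} (hf : f₁ =ᵐ[μ] f₂) :
    (fun x => w x * f₁ (φ x)) =ᵐ[μ] fun x => w x * f₂ (φ x) := by
  set t := toMeasurable μ {x | f₁ x = f₂ x}ᶜ with ht_def
  have ht : MeasurableSet t := measurableSet_toMeasurable _ _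
  have hμt : μ t = 0 := by rw [measure_toMeasurable]; exact hf
  have h1 : (wcMeasure μ w) (φ ⁻¹' t) = 0 := by
    have h := habs hμt
    rwa [Measure.map_apply hφ ht] at h
  have h2 : ∫⁻ x in φ ⁻¹' t, (‖w x‖₊ : ℝ≥0∞) ^ 2 ∂μ = 0 := by
    rw [← withDensity_apply _ (hφ ht)]; exact h1
  have h3 : ∀ᵐ x ∂μ.restrict (φ ⁻¹' t), (‖w x‖₊ : ℝ≥0∞) ^ 2 = 0 :=
    (lintegral_eq_zero_iff ((hw.nnnorm.coe_nnreal_ennreal).pow_const 2)).mp h2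
  rw [ae_restrict_iff' (hφ ht)] at h3
  filter_upwards [h3] with x hx
  by_cases hxt : φ x ∈ t
  · have : w x = 0 := by simpa using hx hxt
    simp [this]
  · have : f₁ (φ x) = f₂ (φ x) := by
      by_contra h
      exact hxt (subset_toMeasurable μ _ h)
    rw [this]

private instance (μ : Measure X) [SFinite μ] (w : X → ℂ) : SFinite (wcMeasure μ w) := by
  unfold wcMeasure; infer_instance

private lemma wc_lintegral (μ : Measure X) [SigmaFinite μ] (w : X → ℂ) (φ : X → X)
    (hw : Measurable w) (hφ : Measurable φ) (habs : (wcMeasure μ w).map φ ≪ μ)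
    {f : X → ℂ} (hf : Measurable f) :
    ∫⁻ x, (‖w x * f (φ x)‖₊ : ℝ≥0∞) ^ 2 ∂μ
      = ∫⁻ x, (‖f x‖₊ : ℝ≥0∞) ^ 2 * wcDeriv μ w φ x ∂μ := by
  have hmap : μ.withDensity (wcDeriv μ w φ) = (wcMeasure μ w).map φ :=
    Measure.withDensity_rnDeriv_eq _ _ habs
  have hg : Measurable fun x => (‖f x‖₊ : ℝ≥0∞) ^ 2 :=
    (hf.nnnorm.coe_nnreal_ennreal).pow_const 2
  have hwm : Measurable fun x => (‖w x‖₊ : ℝ≥0∞) ^ 2 :=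
    (hw.nnnorm.coe_nnreal_ennreal).pow_const 2
  have hh : Measurable (wcDeriv μ w φ) := Measure.measurable_rnDeriv _ _
  calc ∫⁻ x, (‖w x * f (φ x)‖₊ : ℝ≥0∞) ^ 2 ∂μ
      = ∫⁻ x, ((fun y => (‖w y‖₊ : ℝ≥0∞) ^ 2) * fun y => (‖f (φ y)‖₊ : ℝ≥0∞) ^ 2) x ∂μ := by
        simp [nnnorm_mul, ENNReal.coe_mul, mul_pow]
    _ = ∫⁻ x, (‖f (φ x)‖₊ : ℝ≥0∞) ^ 2 ∂(wcMeasure μ w) :=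
        (lintegral_withDensity_eq_lintegral_mul μ hwm (hg.comp hφ)).symm
    _ = ∫⁻ y, (‖f y‖₊ : ℝ≥0∞) ^ 2 ∂((wcMeasure μ w).map φ) := (lintegral_map hg hφ).symm
    _ = ∫⁻ y, (‖f y‖₊ : ℝ≥0∞) ^ 2 ∂(μ.withDensity (wcDeriv μ w φ)) := by rw [hmap]
    _ = ∫⁻ y, ((wcDeriv μ w φ) * fun x => (‖f x‖₊ : ℝ≥0∞) ^ 2) y ∂μ :=
        lintegral_withDensity_eq_lintegral_mul μ hh hg
    _ = ∫⁻ x, (‖f x‖₊ : ℝ≥0∞) ^ 2 * wcDeriv μ w φ x ∂μ := by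
        simp [mul_comm]

private lemma memLp_iff_sq (μ : Measure X) {f : X → ℂ} (hf : AEStronglyMeasurable f μ) :
    MemLp f 2 μ ↔ ∫⁻ x, (‖f x‖₊ : ℝ≥0∞) ^ 2 ∂μ < ⊤ := by
  rw [MemLp, eLpNorm_lt_top_iff_lintegral_rpow_enorm_lt_top (p := 2) two_ne_zero
    ENNReal.ofNat_ne_top]
  simp only [ENNReal.toReal_ofNat]
  simp_rw [ENNReal.rpow_two, enorm_eq_nnnorm]
  exact ⟨fun h => h.2, fun h => ⟨hf, h⟩⟩

theorem aluthge_wco_denselyDefined_iff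
    (μ : Measure X) [SigmaFinite μ] (w : X → ℂ) (φ : X → X)
    (hw : Measurable w) (hφ : Measurable φ)
    (habs : (wcMeasure μ w).map φ ≪ μ) :
    Dense {f : Lp ℂ 2 μ | MemLp (fun x => w x * (f : X → ℂ) (φ x)) 2 μ} ↔
      ∀ᵐ x ∂μ, wcDeriv μ w φ x < ⊤ := by
  have hh : Measurable (wcDeriv μ w φ) := Measure.measurable_rnDeriv _ _
  constructor
  · intro hdense
    by_contra hcon
    have hS : MeasurableSet {x | wcDeriv μ w φ x = ⊤} := hh (measurableSet_singleton ⊤)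
    have hSpos : 0 < μ {x | wcDeriv μ w φ x = ⊤} := by
      rw [pos_iff_ne_zero]
      intro h0
      apply hcon
      refine ae_iff.mpr ?_
      convert h0 using 2
      ext x; simp [lt_top_iff_ne_top]
    obtain ⟨S, hSm, hSsub, hSpos', hStop⟩ :=
      Measure.exists_subset_measure_lt_top hS hSpos
    set g : Lp ℂ 2 μ := indicatorConstLp 2 hSm hStop.ne (1 : ℂ) with hg_def
    have key : ∀ f : Lp ℂ 2 μ, MemLp (fun x => w x * (f : X → ℂ) (φ x)) 2 μ →
        ∀ᵐ x ∂μ, x ∈ S → (f : X → ℂ) x = 0 := by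
      intro f hf
      have hfs : AEStronglyMeasurable (f : X → ℂ) μ := Lp.aestronglyMeasurable f
      set f' := hfs.mk _ with hf'_def
      have hf'm : Measurable f' := hfs.stronglyMeasurable_mk.measurable
      have heq : (f : X → ℂ) =ᵐ[μ] f' := hfs.ae_eq_mk
      have hmem : MemLp (fun x => w x * f' (φ x)) 2 μ :=
        hf.ae_eq (wc_congr μ w φ hw hφ habs heq)
      have hfin : ∫⁻ x, (‖f' x‖₊ : ℝ≥0∞) ^ 2 * wcDeriv μ w φ x ∂μ < ⊤ := by
        rw [← wc_lintegral μ w φ hw hφ habs hf'm]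
        exact (memLp_iff_sq μ hmem.1).mp hmem
      have hae := ae_lt_top ((hf'm.nnnorm.coe_nnreal_ennreal.pow_const 2).mul hh) hfin.ne
      filter_upwards [hae, heq] with x hx hx2 hxS
      have hT : wcDeriv μ w φ x = ⊤ := hSsub hxS
      rw [hx2]
      by_contra hne
      have hnz : (‖f' x‖₊ : ℝ≥0∞) ^ 2 ≠ 0 := by simp [pow_eq_zero_iff, hne]
      rw [Pi.mul_apply, hT, ENNReal.mul_top hnz] at hx
      exact absurd hx (lt_irrefl _)
    set c : ℝ≥0∞ := μ S ^ (1 / (2:ℝ)) with hc_def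
    have hc_pos : 0 < c := ENNReal.rpow_pos hSpos' hStop.ne
    have hc_top : c ≠ ⊤ := (ENNReal.rpow_lt_top_of_nonneg (by norm_num) hStop.ne).ne
    obtain ⟨f, hfD, hdist⟩ := Metric.mem_closure_iff.mp (hdense g) c.toReal
      (ENNReal.toReal_pos hc_pos.ne' hc_top)
    have hf0 := key f hfD
    have hle : c ≤ eLpNorm ((g : X → ℂ) - (f : X → ℂ)) 2 μ := by
      have h1 : eLpNorm ((g : X → ℂ) - (f : X → ℂ)) 2 (μ.restrict S)
          ≤ eLpNorm ((g : X → ℂ) - (f : X → ℂ)) 2 μ :=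
        eLpNorm_mono_measure _ Measure.restrict_le_self
      have h2 : eLpNorm ((g : X → ℂ) - (f : X → ℂ)) 2 (μ.restrict S)
          = eLpNorm (fun _ => (1:ℂ)) 2 (μ.restrict S) := by
        apply eLpNorm_congr_ae
        have hg1 : (g : X → ℂ) =ᵐ[μ] S.indicator fun _ => (1:ℂ) := indicatorConstLp_coeFn
        filter_upwards [ae_restrict_mem hSm, ae_restrict_of_ae hg1,
          ae_restrict_of_ae hf0] with x hxS hgx hfx
        simp [Pi.sub_apply, hgx, Set.indicator_of_mem hxS, hfx hxS]
      have hres : (μ.restrict S) ≠ 0 := by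
        rw [← Measure.measure_univ_ne_zero, Measure.restrict_apply_univ]
        exact hSpos'.ne'
      have h3 : eLpNorm (fun _ => (1:ℂ)) 2 (μ.restrict S) = c := by
        rw [eLpNorm_const _ two_ne_zero hres]
        simp [Measure.restrict_apply_univ, hc_def]
      rw [← h3, ← h2]; exact h1
    have hfinal : c.toReal ≤ dist g f := by
      rw [Lp.dist_def]
      refine ENNReal.toReal_le_toReal hc_top ?_ |>.mpr hle
      rw [eLpNorm_congr_ae (Lp.coeFn_sub g f).symm]
      exact (Lp.eLpNorm_lt_top (g - f)).ne
    linarith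
  · intro hfin
    rw [Metric.dense_iff]
    intro F ε hε
    have hFs : AEStronglyMeasurable (F : X → ℂ) μ := Lp.aestronglyMeasurable F
    set f' := hFs.mk _ with hf'_def
    have hf'm : Measurable f' := hFs.stronglyMeasurable_mk.measurable
    have heq : (F : X → ℂ) =ᵐ[μ] f' := hFs.ae_eq_mk
    have hmemF : MemLp f' 2 μ := (Lp.memLp F).ae_eq heq
    have hintF : ∫⁻ x, (‖f' x‖₊ : ℝ≥0∞) ^ 2 ∂μ < ⊤ := (memLp_iff_sq μ hmemF.1).mp hmemF
    set B : ℕ → Set X := fun n => {x | wcDeriv μ w φ x ≤ n} with hB_def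
    have hBm : ∀ n, MeasurableSet (B n) := fun n => hh measurableSet_Iic
    have hmem : ∀ n, MemLp ((B n).indicator f') 2 μ := fun n => hmemF.indicator (hBm n)
    set G : ℕ → Lp ℂ 2 μ := fun n => (hmem n).toLp _ with hG_def
    have hcoe : ∀ n, ⇑(G n) =ᵐ[μ] (B n).indicator f' := fun n => (hmem n).coeFn_toLp
    have hGD : ∀ n, MemLp (fun x => w x * ((G n : Lp ℂ 2 μ) : X → ℂ) (φ x)) 2 μ := by
      intro n
      have hgm : Measurable ((B n).indicator f') := hf'm.indicator (hBm n)
      suffices hsf : MemLp (fun x => w x * ((B n).indicator f') (φ x)) 2 μ from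
        hsf.ae_eq (wc_congr μ w φ hw hφ habs (hcoe n).symm)
      rw [memLp_iff_sq μ (f := fun x => w x * (B n).indicator f' (φ x))
        (hw.mul (hgm.comp hφ)).aestronglyMeasurable,
        wc_lintegral μ w φ hw hφ habs hgm]
      calc ∫⁻ x, (‖(B n).indicator f' x‖₊ : ℝ≥0∞) ^ 2 * wcDeriv μ w φ x ∂μ
          ≤ ∫⁻ x, (n : ℝ≥0∞) * (‖f' x‖₊ : ℝ≥0∞) ^ 2 ∂μ := by
            apply lintegral_mono
            intro x
            by_cases hx : x ∈ B n
            · have hx' : wcDeriv μ w φ x ≤ n := hx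
              simp only [Set.indicator_of_mem hx]
              exact le_trans (mul_le_mul_right hx' _) (le_of_eq (mul_comm _ _))
            · simp [Set.indicator_of_notMem hx]
        _ < ⊤ := by
            rw [lintegral_const_mul _ (hf'm.nnnorm.coe_nnreal_ennreal.pow_const 2)]
            exact ENNReal.mul_lt_top (ENNReal.natCast_lt_top n) hintF
    set ν := μ.withDensity fun x => (‖f' x‖₊ : ℝ≥0∞) ^ 2 with hν
    have hν_univ : ν Set.univ < ⊤ := by
      rw [hν, withDensity_apply _ MeasurableSet.univ, setLIntegral_univ]
      exact hintF
    have hν_ac : ν ≪ μ := withDensity_absolutelyContinuous _ _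
    have htend : Tendsto (fun n => ν ((B n)ᶜ)) atTop (𝓝 0) := by
      have hnull : μ {x | wcDeriv μ w φ x = ⊤} = 0 := by
        have hfin' := ae_iff.mp hfin
        convert hfin' using 2
        ext x; simp [lt_top_iff_ne_top]
      have h0 : ν (⋂ n, (B n)ᶜ) = 0 := by
        apply hν_ac
        apply measure_mono_null _ hnull
        intro x hx
        simp only [Set.mem_iInter, Set.mem_compl_iff, hB_def, Set.mem_setOf_eq,
          not_le] at hx
        simp only [Set.mem_setOf_eq, top_le_iff]
        by_contra hne
        obtain ⟨n, hn⟩ := ENNReal.exists_nat_gt hne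
        exact absurd (hx n) (not_lt.mpr hn.le)
      have hanti : Antitone fun n => (B n)ᶜ := by
        intro m n hmn
        apply Set.compl_subset_compl.mpr
        intro x hx
        simp only [hB_def, Set.mem_setOf_eq] at hx ⊢
        exact le_trans hx (Nat.cast_le.mpr hmn)
      have := tendsto_measure_iInter_atTop (μ := ν)
        (fun n => (hBm n).compl.nullMeasurableSet) hanti
        ⟨0, (lt_of_le_of_lt (measure_mono (Set.subset_univ _)) hν_univ).ne⟩
      rwa [Function.comp_def, h0] at this
    have hdiff : ∀ n, eLpNorm (⇑F - ⇑(G n)) 2 μ = (ν ((B n)ᶜ)) ^ (1/(2:ℝ)) := by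
      intro n
      have hdeq : (⇑F - ⇑(G n)) =ᵐ[μ] ((B n)ᶜ).indicator f' := by
        filter_upwards [heq, hcoe n] with x h1 h2
        by_cases hx : x ∈ B n <;>
          simp [Pi.sub_apply, h1, h2, hx, Set.indicator_of_mem,
            Set.indicator_of_notMem]
      rw [eLpNorm_congr_ae hdeq,
        eLpNorm_indicator_eq_eLpNorm_restrict (hBm n).compl,
        eLpNorm_eq_lintegral_rpow_enorm_toReal two_ne_zero ENNReal.ofNat_ne_top, hν,
        withDensity_apply _ (hBm n).compl]
      simp_rw [ENNReal.toReal_ofNat, ENNReal.rpow_two, enorm_eq_nnnorm]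
    have htend2 : Tendsto (fun n => eLpNorm (⇑F - ⇑(G n)) 2 μ) atTop (𝓝 0) := by
      simp_rw [hdiff]
      have hcont : Tendsto (fun x : ℝ≥0∞ => x ^ (1/(2:ℝ))) (𝓝 0) (𝓝 (0 ^ (1/(2:ℝ)))) :=
        ENNReal.continuous_rpow_const.tendsto 0
      rw [ENNReal.zero_rpow_of_pos (by norm_num)] at hcont
      exact hcont.comp htend
    obtain ⟨n, hn⟩ :=
      (htend2.eventually_lt_const (ENNReal.ofReal_pos.mpr hε)).exists
    refine ⟨G n, ?_, hGD n⟩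
    rw [Metric.mem_ball, dist_comm, Lp.dist_def]
    exact ENNReal.toReal_lt_of_lt_ofReal hn
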